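/- Let I ⊆ ℝ be an open interval and let ρ, u : ℝⁿ × I → ℝ be C¹ functions and q : ℝⁿ × I → ℝ a C² function, with ρ(x, t) > 0 everywhere, satisfying the continuity equation ∂_t ρ + ∂_{x₁}(ρ u) = 0 and the transport equation ∂_t q + u ∂_{x₁} q = 0 on ℝⁿ × I. Then the function w := (∂_{x₁} q)/ρ satisfies the same transport equation: ∂_t w + u ∂_{x₁} w = 0 on ℝⁿ × I. -/

import Mathlib

open Set

/-- Quotient rule for `fderiv`, applied to a direction. -/
lemma fderiv_div_apply' {E : Type*} [NormedAddCommGroup E] [NormedSpace ℝ E]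
    {f g : E → ℝ} {x : E} (hf : DifferentiableAt ℝ f x) (hg : DifferentiableAt ℝ g x)
    (hx : g x ≠ 0) (d : E) :
    fderiv ℝ (fun y => f y / g y) x d =
      (fderiv ℝ f x d * g x - f x * fderiv ℝ g x d) / g x ^ 2 := by
  have hinv : HasFDerivAt (fun y => (g y)⁻¹) ((-(g x ^ 2)⁻¹) • fderiv ℝ g x) x :=
    (hasDerivAt_inv hx).comp_hasFDerivAt x hg.hasFDerivAt
  have hmul := hf.hasFDerivAt.mul hinv
  have : fderiv ℝ (fun y => f y / g y) x =
      f x • ((-(g x ^ 2)⁻¹) • fderiv ℝ g x) + (g x)⁻¹ • fderiv ℝ f x := by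
    simpa only [div_eq_mul_inv, Pi.mul_def] using hmul.fderiv
  rw [this]
  simp only [ContinuousLinearMap.add_apply, ContinuousLinearMap.smul_apply, smul_eq_mul]
  field_simp
  ring

theorem stmt6 (n : ℕ) (hn : 0 < n) (I : Set ℝ) (hI_open : IsOpen I) (hI_conn : I.OrdConnected)
    (ρ u : ((Fin n → ℝ) × ℝ) → ℝ) (q : ((Fin n → ℝ) × ℝ) → ℝ)
    (hρ : ContDiffOn ℝ 1 ρ (Set.univ ×ˢ I))
    (hu : ContDiffOn ℝ 1 u (Set.univ ×ˢ I))
    (hq : ContDiffOn ℝ 2 q (Set.univ ×ˢ I))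
    (hpos : ∀ p ∈ Set.univ ×ˢ I, 0 < ρ p)
    (hcont : ∀ p ∈ Set.univ ×ˢ I,
      fderiv ℝ ρ p ((0 : Fin n → ℝ), (1 : ℝ)) +
        fderiv ℝ (fun w => ρ w * u w) p
          ((Pi.single (⟨0, hn⟩ : Fin n) (1 : ℝ) : Fin n → ℝ), (0 : ℝ)) = 0)
    (htrans : ∀ p ∈ Set.univ ×ˢ I,
      fderiv ℝ q p ((0 : Fin n → ℝ), (1 : ℝ)) +
        u p * fderiv ℝ q p
          ((Pi.single (⟨0, hn⟩ : Fin n) (1 : ℝ) : Fin n → ℝ), (0 : ℝ)) = 0) :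
    ∀ p ∈ Set.univ ×ˢ I,
      fderiv ℝ (fun w =>
          fderiv ℝ q w ((Pi.single (⟨0, hn⟩ : Fin n) (1 : ℝ) : Fin n → ℝ), (0 : ℝ)) / ρ w)
          p ((0 : Fin n → ℝ), (1 : ℝ)) +
        u p * fderiv ℝ (fun w =>
          fderiv ℝ q w ((Pi.single (⟨0, hn⟩ : Fin n) (1 : ℝ) : Fin n → ℝ), (0 : ℝ)) / ρ w)
          p ((Pi.single (⟨0, hn⟩ : Fin n) (1 : ℝ) : Fin n → ℝ), (0 : ℝ)) = 0 := by
  intro p hp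
  set e1 : (Fin n → ℝ) × ℝ := ((Pi.single (⟨0, hn⟩ : Fin n) (1 : ℝ) : Fin n → ℝ), (0 : ℝ)) with he1
  set et : (Fin n → ℝ) × ℝ := ((0 : Fin n → ℝ), (1 : ℝ)) with het
  have hΩ : IsOpen ((Set.univ : Set (Fin n → ℝ)) ×ˢ I) := isOpen_univ.prod hI_open
  have hnhds : (Set.univ : Set (Fin n → ℝ)) ×ˢ I ∈ nhds p := hΩ.mem_nhds hp
  -- basic differentiability
  have hρd : DifferentiableAt ℝ ρ p :=
    ((hρ.contDiffAt hnhds).differentiableAt one_ne_zero)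
  have hud : DifferentiableAt ℝ u p :=
    ((hu.contDiffAt hnhds).differentiableAt one_ne_zero)
  have hq2 : ContDiffAt ℝ 2 q p := hq.contDiffAt hnhds
  have hq' : ContDiffAt ℝ 1 (fderiv ℝ q) p := hq2.fderiv_right (by norm_num)
  have hq'd : DifferentiableAt ℝ (fderiv ℝ q) p := hq'.differentiableAt one_ne_zero
  -- first directional derivatives as functions
  set v : ((Fin n → ℝ) × ℝ) → ℝ := fun w => fderiv ℝ q w e1 with hv
  set vt : ((Fin n → ℝ) × ℝ) → ℝ := fun w => fderiv ℝ q w et with hvt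
  have hvd : DifferentiableAt ℝ v p := hq'd.clm_apply (differentiableAt_const _)
  have hvtd : DifferentiableAt ℝ vt p := hq'd.clm_apply (differentiableAt_const _)
  have hfv : ∀ d, fderiv ℝ v p d = fderiv ℝ (fderiv ℝ q) p d e1 := by
    intro d
    rw [hv, fderiv_clm_apply hq'd (differentiableAt_const _)]
    simp
  have hfvt : ∀ d, fderiv ℝ vt p d = fderiv ℝ (fderiv ℝ q) p d et := by
    intro d
    rw [hvt, fderiv_clm_apply hq'd (differentiableAt_const _)]
    simp
  -- symmetry of second derivative
  have hsymm : fderiv ℝ (fderiv ℝ q) p e1 et = fderiv ℝ (fderiv ℝ q) p et e1 :=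
    hq2.isSymmSndFDerivAt (by norm_num) e1 et
  -- differentiate the transport equation in direction e1
  have hF0 : (fun w => vt w + u w * v w) =ᶠ[nhds p] (fun _ => (0 : ℝ)) := by
    filter_upwards [hnhds] with w hw
    exact htrans w hw
  have hdF : fderiv ℝ (fun w => vt w + u w * v w) p = 0 := by
    rw [hF0.fderiv_eq]
    exact fderiv_const_apply 0
  have hmulvd : DifferentiableAt ℝ (fun w => u w * v w) p := hud.mul hvd
  have hT : fderiv ℝ vt p e1 + (u p * fderiv ℝ v p e1 + v p * fderiv ℝ u p e1) = 0 := by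
    have h1 : fderiv ℝ (fun w => vt w + u w * v w) p e1 = 0 := by rw [hdF]; rfl
    rw [fderiv_fun_add hvtd hmulvd] at h1
    rw [fderiv_fun_mul hud hvd] at h1
    simpa using h1
  -- expand the continuity equation
  have hC : fderiv ℝ ρ p et + (ρ p * fderiv ℝ u p e1 + u p * fderiv ℝ ρ p e1) = 0 := by
    have := hcont p hp
    rw [fderiv_fun_mul hρd hud] at this
    simpa using this
  -- quotient rule
  have hρne : ρ p ≠ 0 := (hpos p hp).ne'
  have hdiv : ∀ d, fderiv ℝ (fun w => v w / ρ w) p d =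
      (fderiv ℝ v p d * ρ p - v p * fderiv ℝ ρ p d) / ρ p ^ 2 :=
    fun d => fderiv_div_apply' hvd hρd hρne d
  -- assemble
  have key : fderiv ℝ (fun w => v w / ρ w) p et + u p * fderiv ℝ (fun w => v w / ρ w) p e1 = 0 := by
    rw [hdiv, hdiv]
    have hAB : fderiv ℝ vt p e1 = fderiv ℝ v p et := by
      rw [hfvt e1, hfv et, hsymm]
    rw [hAB] at hT
    field_simp
    linear_combination ρ p * hT - v p * hC
  exact key
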